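/- Ordinal multiplication preserves Cantor normal form: for all trees a, b, if isCNF a and isCNF b, then isCNF (a · b). -/
import Mathlib


namespace CNFOrd

/-- Binary trees: `omega a b` represents the ordinal `ω^a + b`. -/
inductive T : Type
  | zero : T
  | omega : T → T → T
  deriving DecidableEq

namespace T

/-- The strict order on trees. -/
inductive Lt : T → T → Prop
  | lt1 {a b : T} : Lt zero (omega a b)
  | lt2 {a b c d : T} : Lt a c → Lt (omega a b) (omega c d)
  | lt3 {a b c d : T} : a = c → Lt b d → Lt (omega a b) (omega c d)

/-- `a ≥ b` means `b < a` or `a = b`. -/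
def Ge (a b : T) : Prop := Lt b a ∨ a = b

/-- First exponent of a tree. -/
def fst : T → T
  | zero => zero
  | omega a _ => a

/-- The predicate of being in Cantor normal form. -/
inductive isCNF : T → Prop
  | zero : isCNF zero
  | omega {a b : T} : isCNF a → isCNF b → Ge a (fst b) → isCNF (omega a b)

/-- Decidability of the strict order. -/
def decLt : (a b : T) → Decidable (Lt a b)
  | _, zero => isFalse fun h => nomatch h
  | zero, omega _ _ => isTrue .lt1
  | omega a b, omega c d =>
    match decLt a c with
    | isTrue h => isTrue (.lt2 h)
    | isFalse h1 =>
      if he : a = c then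
        match decLt b d with
        | isTrue h2 => isTrue (.lt3 he h2)
        | isFalse h2 => isFalse fun h => by
            cases h with
            | lt2 h' => exact h1 h'
            | lt3 _ h2' => exact h2 h2'
      else isFalse fun h => by
            cases h with
            | lt2 h' => exact h1 h'
            | lt3 he' _ => exact he he'

instance : ∀ a b : T, Decidable (Lt a b) := decLt

/-- List insertion. -/
def insert (a : T) : T → T
  | zero => omega a zero
  | omega b c => if Lt a b then omega b (insert a c) else omega a (omega b c)

/-- The permutation congruence: smallest equivalence relation which is a
congruence for `omega` and satisfies the swap rule. -/
inductive Perm : T → T → Prop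
  | refl (a : T) : Perm a a
  | symm {a b : T} : Perm a b → Perm b a
  | trans {a b c : T} : Perm a b → Perm b c → Perm a c
  | congr {a a' b b' : T} : Perm a a' → Perm b b' → Perm (omega a b) (omega a' b')
  | swap (a b c : T) : Perm (omega a (omega b c)) (omega b (omega a c))

instance permSetoid : Setoid T := ⟨Perm, ⟨Perm.refl, Perm.symm, Perm.trans⟩⟩

/-- Hessenberg sum. -/
def oplus : T → T → T
  | zero, y => y
  | omega a b, y => omega a (oplus b y)

/-- Ordinal addition. -/
def add : T → T → T
  | zero, b => b
  | a, zero => a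
  | omega a c, omega b d => if Lt a b then omega b d else omega a (add c (omega b d))

/-- Ordinal multiplication. -/
def mul : T → T → T
  | zero, _ => zero
  | _, zero => zero
  | a, omega zero d => add a (mul a d)
  | omega a c, omega b d => omega (add a b) (mul (omega a c) d)

end T

end CNFOrd

namespace CNFOrd.T

theorem not_lt_zero {a : T} : ¬ Lt a zero := fun h => nomatch h

theorem lt_irrefl : ∀ a : T, ¬ Lt a a := by
  intro a
  induction a with
  | zero => exact not_lt_zero
  | omega a b iha ihb =>
    intro h
    cases h with
    | lt2 h' => exact iha h'
    | lt3 _ h' => exact ihb h'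

theorem lt_trans : ∀ {a b c : T}, Lt a b → Lt b c → Lt a c := by
  intro a b c h1
  induction h1 generalizing c with
  | lt1 =>
    intro h2
    cases h2 <;> exact .lt1
  | lt2 h ih =>
    intro h2
    cases h2 with
    | lt2 h' => exact .lt2 (ih h')
    | lt3 he h' => subst he; exact .lt2 h
  | lt3 he h ih =>
    intro h2
    subst he
    cases h2 with
    | lt2 h' => exact .lt2 h'
    | lt3 he' h' => subst he'; exact .lt3 rfl (ih h')

theorem lt_tri : ∀ a b : T, Lt a b ∨ a = b ∨ Lt b a := by
  intro a
  induction a with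
  | zero =>
    intro b
    cases b with
    | zero => right; left; rfl
    | omega _ _ => left; exact .lt1
  | omega a1 a2 ih1 ih2 =>
    intro b
    cases b with
    | zero => right; right; exact .lt1
    | omega b1 b2 =>
      rcases ih1 b1 with h | h | h
      · left; exact .lt2 h
      · rcases ih2 b2 with h2 | h2 | h2
        · left; exact .lt3 h h2
        · right; left; rw [h, h2]
        · right; right; exact .lt3 h.symm h2
      · right; right; exact .lt2 h

theorem zero_add (b : T) : add zero b = b := by cases b <;> rfl

theorem add_zero (a : T) : add a zero = a := by cases a <;> rfl

theorem add_oo (a c b d : T) :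
    add (omega a c) (omega b d) =
      if Lt a b then omega b d else omega a (add c (omega b d)) := rfl

theorem zero_mul (b : T) : mul zero b = zero := by
  cases b with
  | zero => rfl
  | omega e f => cases e <;> rfl

theorem mul_zero (a : T) : mul a zero = zero := by cases a <;> rfl

theorem mul_o_zero (a c d : T) :
    mul (omega a c) (omega zero d) = add (omega a c) (mul (omega a c) d) := rfl

theorem mul_o_o (a c e1 e2 d : T) :
    mul (omega a c) (omega (omega e1 e2) d) =
      omega (add a (omega e1 e2)) (mul (omega a c) d) := rfl

theorem fst_omega (a b : T) : fst (omega a b) = a := rfl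

theorem fst_add (a b : T) : fst (add a b) = fst a ∨ fst (add a b) = fst b := by
  cases a with
  | zero => right; rw [zero_add]
  | omega a1 c =>
    cases b with
    | zero => left; rw [add_zero]
    | omega b1 d =>
      rw [add_oo]
      split
      · right; rfl
      · left; rfl

theorem isCNF_add : ∀ a b : T, isCNF a → isCNF b → isCNF (add a b) := by
  intro a
  induction a with
  | zero => intro b _ hb; rw [zero_add]; exact hb
  | omega a1 c _ ihc =>
    intro b ha hb
    cases b with
    | zero => rw [add_zero]; exact ha
    | omega b1 d =>
      cases ha with
      | omega ha1 hc hge =>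
        rw [add_oo]
        split
        · exact hb
        · rename_i hnlt
          refine .omega ha1 (ihc _ hc hb) ?_
          rcases fst_add c (omega b1 d) with h | h
          · rw [h]; exact hge
          · rw [h, fst_omega]
            rcases lt_tri a1 b1 with h' | h' | h'
            · exact absurd h' hnlt
            · right; exact h'
            · left; exact h'

theorem lt_add_omega : ∀ c u v : T, Lt c (add c (omega u v)) := by
  intro c
  induction c with
  | zero => intro u v; rw [zero_add]; exact .lt1
  | omega c1 e _ ih2 =>
    intro u v
    rw [add_oo]
    split
    · exact .lt2 ‹Lt c1 u›
    · exact .lt3 rfl (ih2 u v)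

theorem add_lt_add_left : ∀ (a : T) {x y : T}, Lt x y → Lt (add a x) (add a y) := by
  intro a
  induction a with
  | zero => intro x y h; rw [zero_add, zero_add]; exact h
  | omega a1 c _ ihc =>
    intro x y h
    cases x with
    | zero =>
      cases y with
      | zero => exact absurd h not_lt_zero
      | omega y1 y2 =>
        rw [add_zero, add_oo]
        split
        · exact .lt2 ‹Lt a1 y1›
        · exact .lt3 rfl (lt_add_omega c y1 y2)
    | omega x1 x2 =>
      cases y with
      | zero => exact absurd h not_lt_zero
      | omega y1 y2 =>
        rw [add_oo, add_oo]
        split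
        · rename_i h1
          split
          · exact h
          · rename_i h2
            cases h with
            | lt2 h' => exact absurd (lt_trans h1 h') h2
            | lt3 he _ => subst he; exact absurd h1 h2
        · split
          · rename_i h2; exact .lt2 h2
          · exact .lt3 rfl (ihc h)

theorem zero_lt_add_omega : ∀ x u v : T, Lt zero (add x (omega u v)) := by
  intro x u v
  cases x with
  | zero => rw [zero_add]; exact .lt1
  | omega x1 y =>
    rw [add_oo]
    split <;> exact .lt1

theorem fst_add_of_not_lt {a1 : T} (c x : T) (h : ¬ Lt a1 (fst x)) :
    fst (add (omega a1 c) x) = a1 := by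
  cases x with
  | zero => rw [add_zero]; rfl
  | omega x1 y =>
    rw [fst_omega] at h
    rw [add_oo, if_neg h, fst_omega]

theorem fst_mul {a1 c : T} : ∀ d : T, isCNF d → d ≠ zero →
    fst (mul (omega a1 c) d) = add a1 (fst d) := by
  intro d
  induction d with
  | zero => intro _ h; exact absurd rfl h
  | omega e f _ ihf =>
    intro hd _
    cases hd with
    | omega he hf hge =>
      cases e with
      | zero =>
        have hfstf : fst f = zero := by
          rcases hge with h | h
          · exact absurd h not_lt_zero
          · exact h.symm
        have hnlt : ¬ Lt a1 (fst (mul (omega a1 c) f)) := by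
          by_cases hf0 : f = zero
          · subst hf0; rw [mul_zero]; exact not_lt_zero
          · rw [ihf hf hf0, hfstf, add_zero]; exact lt_irrefl a1
        rw [mul_o_zero, fst_add_of_not_lt c _ hnlt, fst_omega, add_zero]
      | omega e1 e2 => rw [mul_o_o, fst_omega, fst_omega]

end CNFOrd.T
open CNFOrd T in
/-- ordinal multiplication preserves Cantor normal form. -/
theorem isCNF_mul : ∀ a b : T, isCNF a → isCNF b → isCNF (mul a b) := by
  intro a b ha
  induction b with
  | zero => intro _; rw [T.mul_zero]; exact .zero
  | omega e f _ ihf =>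
    intro hb
    cases hb with
    | omega he hf hge =>
      cases a with
      | zero => rw [zero_mul]; exact .zero
      | omega a1 c =>
        cases e with
        | zero =>
          rw [mul_o_zero]
          exact isCNF_add _ _ ha (ihf hf)
        | omega e1 e2 =>
          rw [mul_o_o]
          cases ha with
          | omega ha1 hc hga =>
            refine .omega (isCNF_add _ _ ha1 he) (ihf hf) ?_
            by_cases hf0 : f = zero
            · subst hf0
              rw [T.mul_zero]
              left
              exact zero_lt_add_omega a1 e1 e2
            · rw [fst_mul f hf hf0]
              rcases hge with h | h
              · left; exact add_lt_add_left a1 h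
              · right; rw [h]
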